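/- Let G be a bipartite graph with parts [n] and [n], and let E_G be its Edmonds matrix, the n×n matrix over the polynomial ring ℝ[x_{ij} : 1 ≤ i,j ≤ n] with (E_G)_{ij} = x_{ij} if ij is an edge of G and 0 otherwise. Then G has a perfect matching if and only if det E_G is not the zero polynomial. -/

import Mathlib

open MvPolynomial

/-- Edmonds' theorem (Lemma 3.12): a bipartite graph `G` on `[n] ⊔ [n]`, given by its
edge relation `E`, has a perfect matching if and only if the determinant of its Edmonds
matrix — the `n×n` matrix over `ℝ[x_{ij}]` with entry `x_{ij}` if `ij ∈ E` and `0`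
otherwise — is not the zero polynomial. -/
theorem perfect_matching_iff_edmonds_det_ne_zero
    {n : ℕ} (E : Fin n → Fin n → Prop) [DecidableRel E]
    (M : Matrix (Fin n) (Fin n) (MvPolynomial (Fin n × Fin n) ℝ))
    (hM : ∀ i j, M i j = if E i j then X (i, j) else 0) :
    (∃ σ : Equiv.Perm (Fin n), ∀ i, E i (σ i)) ↔ M.det ≠ 0 := by
  constructor
  · rintro ⟨σ, hσ⟩ hdet
    set v : Fin n × Fin n → ℝ := fun p => if p.2 = σ p.1 then 1 else 0 with hv
    have h1 : (aeval v) M.det = 0 := by rw [hdet]; simp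
    rw [show (aeval v) M.det = (M.map (aeval v)).det from
      RingHom.map_det (aeval v).toRingHom M] at h1
    have h2 : M.map (aeval v) = σ.permMatrix ℝ := by
      ext i j
      simp only [Matrix.map_apply, hM, Equiv.Perm.permMatrix, PEquiv.toMatrix_apply,
        Equiv.toPEquiv_apply, Option.mem_def, Option.some.injEq]
      by_cases h : j = σ i
      · subst h
        simp [hσ i, hv]
      · rw [if_neg (Ne.symm h)]
        split_ifs with h' <;> simp [hv, h]
    rw [h2, Matrix.det_permutation] at h1
    rcases Int.units_eq_one_or (Equiv.Perm.sign σ) with h | h <;> simp [h] at h1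
  · intro hdet
    by_contra hno
    push_neg at hno
    apply hdet
    rw [Matrix.det_apply]
    refine Finset.sum_eq_zero fun τ _ => ?_
    obtain ⟨i, hi⟩ := hno τ⁻¹
    refine smul_eq_zero_of_right _ (Finset.prod_eq_zero (Finset.mem_univ (τ⁻¹ i)) ?_)
    rw [show τ (τ⁻¹ i) = i from τ.apply_symm_apply i, hM, if_neg hi]
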